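/- There is no isometry M : ℂ² → ℂ^{d_A} ⊗ ℂ^{d_B} masking all qubit pure states, i.e., such that Tr_B[M|ψ⟩⟨ψ|M†] is the same for all unit vectors |ψ⟩ ∈ ℂ² and Tr_A[M|ψ⟩⟨ψ|M†] is the same for all |ψ⟩. -/
import Mathlib


open Matrix
open scoped ComplexOrder

noncomputable section

/-- Partial trace over the first (A) factor. -/
def ptA {dA dB : ℕ} (M : Matrix (Fin dA × Fin dB) (Fin dA × Fin dB) ℂ) :
    Matrix (Fin dB) (Fin dB) ℂ :=
  fun i j => ∑ k, M (k, i) (k, j)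

/-- Partial trace over the second (B) factor. -/
def ptB {dA dB : ℕ} (M : Matrix (Fin dA × Fin dB) (Fin dA × Fin dB) ℂ) :
    Matrix (Fin dA) (Fin dA) ℂ :=
  fun i j => ∑ k, M (i, k) (j, k)

namespace NoMaskAux

variable {dA dB : ℕ}

/-- "B-side" Gram block: partial trace over B of `x y†`. -/
def Bq (x y : Fin dA × Fin dB → ℂ) (a a' : Fin dA) : ℂ :=
  ∑ b, x (a, b) * (starRingEnd ℂ) (y (a', b))

/-- "A-side" Gram block: partial trace over A of `x y†`. -/
def Aq (x y : Fin dA × Fin dB → ℂ) (b b' : Fin dB) : ℂ :=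
  ∑ a, x (a, b) * (starRingEnd ℂ) (y (a, b'))

lemma rho_apply (M : Matrix (Fin dA × Fin dB) (Fin 2) ℂ) (ψ : Fin 2 → ℂ) (p q) :
    (M * vecMulVec ψ (star ψ) * Mᴴ) p q =
      M.mulVec ψ p * (starRingEnd ℂ) (M.mulVec ψ q) := by
  simp only [Matrix.mul_apply, vecMulVec_apply, conjTranspose_apply, Matrix.mulVec,
    dotProduct, Pi.star_apply, map_sum, Finset.sum_mul, Finset.mul_sum, RCLike.star_def]
  refine Finset.sum_congr rfl fun j _ => Finset.sum_congr rfl fun i _ => ?_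
  simp only [_root_.map_mul]
  ring

lemma ptA_rho (M : Matrix (Fin dA × Fin dB) (Fin 2) ℂ) (ψ : Fin 2 → ℂ) (b b' : Fin dB) :
    ptA (M * vecMulVec ψ (star ψ) * Mᴴ) b b' = Aq (M.mulVec ψ) (M.mulVec ψ) b b' := by
  simp [ptA, Aq, rho_apply]

lemma ptB_rho (M : Matrix (Fin dA × Fin dB) (Fin 2) ℂ) (ψ : Fin 2 → ℂ) (a a' : Fin dA) :
    ptB (M * vecMulVec ψ (star ψ) * Mᴴ) a a' = Bq (M.mulVec ψ) (M.mulVec ψ) a a' := by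
  simp [ptB, Bq, rho_apply]

lemma mulVec_two (M : Matrix (Fin dA × Fin dB) (Fin 2) ℂ) (c0 c1 : ℂ) :
    M.mulVec ![c0, c1] = fun p => M p 0 * c0 + M p 1 * c1 := by
  funext p
  simp [Matrix.mulVec, dotProduct, Fin.sum_univ_two]

lemma Aq_expand (u v : Fin dA × Fin dB → ℂ) (c0 c1 : ℂ) (b b' : Fin dB) :
    Aq (fun p => u p * c0 + v p * c1) (fun p => u p * c0 + v p * c1) b b' =
      c0 * (starRingEnd ℂ) c0 * Aq u u b b' + c0 * (starRingEnd ℂ) c1 * Aq u v b b'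
        + c1 * (starRingEnd ℂ) c0 * Aq v u b b' + c1 * (starRingEnd ℂ) c1 * Aq v v b b' := by
  simp only [Aq, Finset.mul_sum]
  rw [← Finset.sum_add_distrib, ← Finset.sum_add_distrib, ← Finset.sum_add_distrib]
  refine Finset.sum_congr rfl fun a _ => ?_
  simp only [map_add, _root_.map_mul]
  ring

lemma Bq_conj (x y : Fin dA × Fin dB → ℂ) (a a' : Fin dA) :
    (starRingEnd ℂ) (Bq x y a a') = Bq y x a' a := by
  simp only [Bq, map_sum, _root_.map_mul, Complex.conj_conj]
  exact Finset.sum_congr rfl fun b _ => by ring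

lemma sum4 (f : Fin dA → Fin dA → Fin dB → Fin dB → ℂ) :
    ∑ a, ∑ a', ∑ b, ∑ b', f a a' b b'
      = ∑ b, ∑ b', ∑ a, ∑ a', f a a' b b' := by
  calc ∑ a, ∑ a', ∑ b, ∑ b', f a a' b b'
      = ∑ a, ∑ b, ∑ a', ∑ b', f a a' b b' :=
        Finset.sum_congr rfl fun a _ => Finset.sum_comm
    _ = ∑ b, ∑ a, ∑ a', ∑ b', f a a' b b' := Finset.sum_comm
    _ = ∑ b, ∑ a, ∑ b', ∑ a', f a a' b b' :=
        Finset.sum_congr rfl fun b _ => Finset.sum_congr rfl fun a _ => Finset.sum_comm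
    _ = ∑ b, ∑ b', ∑ a, ∑ a', f a a' b b' :=
        Finset.sum_congr rfl fun b _ => Finset.sum_comm

end NoMaskAux

open NoMaskAux

theorem stmt15 :
    ¬ ∃ (dA dB : ℕ) (M : Matrix (Fin dA × Fin dB) (Fin 2) ℂ),
      Mᴴ * M = 1 ∧
      ∀ ψ φ : Fin 2 → ℂ, star ψ ⬝ᵥ ψ = 1 → star φ ⬝ᵥ φ = 1 →
        ptA (M * vecMulVec ψ (star ψ) * Mᴴ) = ptA (M * vecMulVec φ (star φ) * Mᴴ) ∧
        ptB (M * vecMulVec ψ (star ψ) * Mᴴ) = ptB (M * vecMulVec φ (star φ) * Mᴴ) := by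
  rintro ⟨dA, dB, M, hIso, hMask⟩
  set u : Fin dA × Fin dB → ℂ := fun p => M p 0 with hu
  set v : Fin dA × Fin dB → ℂ := fun p => M p 1 with hv
  set rc : ℂ := Complex.ofReal ((Real.sqrt 2)⁻¹) with hrcdef
  have hcrc : (starRingEnd ℂ) rc = rc := Complex.conj_ofReal _
  have hrc : rc * rc = 1 / 2 := by
    rw [hrcdef, ← Complex.ofReal_mul, ← mul_inv, Real.mul_self_sqrt (by norm_num : (2:ℝ) ≥ 0)]
    norm_num
  -- unit vectors
  have he0 : star ![(1:ℂ), 0] ⬝ᵥ ![(1:ℂ), 0] = 1 := by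
    simp [dotProduct, Fin.sum_univ_two]
  have he1 : star ![(0:ℂ), 1] ⬝ᵥ ![(0:ℂ), 1] = 1 := by
    simp [dotProduct, Fin.sum_univ_two]
  have hψp : star ![rc, rc] ⬝ᵥ ![rc, rc] = 1 := by
    simp only [dotProduct, Fin.sum_univ_two, Pi.star_apply, Matrix.cons_val_zero,
      Matrix.cons_val_one, Matrix.head_cons, RCLike.star_def, hcrc]
    linear_combination 2 * hrc
  have hψm : star ![rc, -rc] ⬝ᵥ ![rc, -rc] = 1 := by
    simp only [dotProduct, Fin.sum_univ_two, Pi.star_apply, Matrix.cons_val_zero,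
      Matrix.cons_val_one, Matrix.head_cons, RCLike.star_def, map_neg, hcrc]
    linear_combination 2 * hrc
  have hψI : star ![rc, rc * Complex.I] ⬝ᵥ ![rc, rc * Complex.I] = 1 := by
    simp only [dotProduct, Fin.sum_univ_two, Pi.star_apply, Matrix.cons_val_zero,
      Matrix.cons_val_one, Matrix.head_cons, RCLike.star_def, _root_.map_mul,
      Complex.conj_I, hcrc]
    linear_combination 2 * hrc - (rc * rc) * Complex.I_mul_I
  have hψJ : star ![rc, -(rc * Complex.I)] ⬝ᵥ ![rc, -(rc * Complex.I)] = 1 := by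
    simp only [dotProduct, Fin.sum_univ_two, Pi.star_apply, Matrix.cons_val_zero,
      Matrix.cons_val_one, Matrix.head_cons, RCLike.star_def, map_neg, _root_.map_mul,
      Complex.conj_I, hcrc]
    linear_combination 2 * hrc - (rc * rc) * Complex.I_mul_I
  -- mulVec of explicit qubit states
  have hmv : ∀ c0 c1 : ℂ, M.mulVec ![c0, c1] = fun p => u p * c0 + v p * c1 := fun c0 c1 =>
    mulVec_two M c0 c1
  have hmv0 : M.mulVec ![(1:ℂ), 0] = u := by
    rw [hmv]; funext p; simp
  have hmv1 : M.mulVec ![(0:ℂ), 1] = v := by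
    rw [hmv]; funext p; simp
  -- |0>,|1> give equal B-side reductions
  have h3 : ∀ a a', Bq u u a a' = Bq v v a a' := by
    intro a a'
    have h := (hMask ![(1:ℂ), 0] ![(0:ℂ), 1] he0 he1).2
    have h' := congrFun (congrFun h a) a'
    rwa [ptB_rho, ptB_rho, hmv0, hmv1] at h'
  -- superposition states kill the A-side cross block
  have h2 : ∀ b b', Aq u v b b' = 0 := by
    intro b b'
    have hp := congrFun (congrFun (hMask ![rc, rc] ![rc, -rc] hψp hψm).1 b) b'
    rw [ptA_rho, ptA_rho, hmv rc rc, hmv rc (-rc), Aq_expand, Aq_expand] at hp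
    have hq := congrFun (congrFun
      (hMask ![rc, rc * Complex.I] ![rc, -(rc * Complex.I)] hψI hψJ).1 b) b'
    rw [ptA_rho, ptA_rho, hmv rc (rc * Complex.I), hmv rc (-(rc * Complex.I)),
      Aq_expand, Aq_expand] at hq
    simp only [map_neg, _root_.map_mul, Complex.conj_I, hcrc] at hp hq
    linear_combination (1/2 : ℂ) * hp + (Complex.I / 2) * hq
      + (rc * rc * (Aq u v b b' - Aq v u b b')) * Complex.I_mul_I
      - 2 * (Aq u v b b') * hrc
  -- key positivity computation
  have key : ∑ a, ∑ a', Bq u u a a' * (starRingEnd ℂ) (Bq u u a a') = 0 := by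
    calc ∑ a, ∑ a', Bq u u a a' * (starRingEnd ℂ) (Bq u u a a')
        = ∑ a, ∑ a', Bq u u a a' * Bq v v a' a := by
          refine Finset.sum_congr rfl fun a _ => Finset.sum_congr rfl fun a' _ => ?_
          rw [Bq_conj, h3 a' a]
      _ = ∑ a, ∑ a', ∑ b, ∑ b',
            (u (a, b) * (starRingEnd ℂ) (u (a', b))) *
              (v (a', b') * (starRingEnd ℂ) (v (a, b'))) := by
          refine Finset.sum_congr rfl fun a _ => Finset.sum_congr rfl fun a' _ => ?_
          simp only [Bq]
          rw [Finset.sum_mul_sum]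
      _ = ∑ b, ∑ b', ∑ a, ∑ a',
            (u (a, b) * (starRingEnd ℂ) (u (a', b))) *
              (v (a', b') * (starRingEnd ℂ) (v (a, b'))) := sum4 _
      _ = ∑ b, ∑ b', Aq u v b b' * Aq v u b' b := by
          refine Finset.sum_congr rfl fun b _ => Finset.sum_congr rfl fun b' _ => ?_
          simp only [Aq]
          rw [Finset.sum_mul_sum]
          refine Finset.sum_congr rfl fun a _ => Finset.sum_congr rfl fun a' _ => ?_
          ring
      _ = 0 := by
          refine Finset.sum_eq_zero fun b _ => Finset.sum_eq_zero fun b' _ => ?_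
          rw [h2, zero_mul]
  have hns : ∑ a, ∑ a', Complex.normSq (Bq u u a a') = 0 := by
    have hcast : ((∑ a, ∑ a', Complex.normSq (Bq u u a a') : ℝ) : ℂ) = 0 := by
      push_cast
      rw [← key]
      refine Finset.sum_congr rfl fun a _ => Finset.sum_congr rfl fun a' _ => ?_
      rw [Complex.mul_conj]
    exact_mod_cast hcast
  have hdiag : ∀ a, Bq u u a a = 0 := by
    intro a
    have h1 : ∑ a', Complex.normSq (Bq u u a a') = 0 :=
      (Finset.sum_eq_zero_iff_of_nonneg (fun i _ =>
        Finset.sum_nonneg fun j _ => Complex.normSq_nonneg _)).1 hns a (Finset.mem_univ a)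
    have h0 : Complex.normSq (Bq u u a a) = 0 :=
      (Finset.sum_eq_zero_iff_of_nonneg (fun j _ => Complex.normSq_nonneg _)).1 h1 a
        (Finset.mem_univ a)
    exact Complex.normSq_eq_zero.mp h0
  have htr : ∑ a, Bq u u a a = 1 := by
    have h00 := congrFun (congrFun hIso 0) 0
    simp only [Matrix.mul_apply, conjTranspose_apply, Matrix.one_apply_eq,
      RCLike.star_def] at h00
    calc ∑ a, Bq u u a a = ∑ p : Fin dA × Fin dB, u p * (starRingEnd ℂ) (u p) := by
          rw [Fintype.sum_prod_type]; rfl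
      _ = 1 := by
          rw [← h00]
          exact Finset.sum_congr rfl fun p _ => mul_comm _ _
  have : (1 : ℂ) = 0 := by
    rw [← htr]
    exact Finset.sum_eq_zero fun a _ => hdiag a
  exact one_ne_zero this
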